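/- For every online dominating-set algorithm A and every n ≥ 1, there exists a tree T on vertex set {1, …, n} such that for every i with 1 ≤ i ≤ n the subgraph of T induced by {1, …, i} is connected, and |A(n, T)| ≥ n − 1. -/

import Mathlib

/-- `H` is a graph on the vertex set `{v_0, …, v_{i-1}}` (0-indexed version of
`{1, …, i}`): all its edges join vertices with index `< i`. -/
def GraphOn (H : SimpleGraph ℕ) (i : ℕ) : Prop :=
  ∀ a b : ℕ, H.Adj a b → a < i ∧ b < i

/-- The subgraph of `H` induced by the first `i` vertices, viewed again as a graph
on `ℕ`. -/
def restrict (H : SimpleGraph ℕ) (i : ℕ) : SimpleGraph ℕ where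
  Adj a b := H.Adj a b ∧ a < i ∧ b < i
  symm := by
    constructor
    intro a b h
    exact ⟨h.1.symm, h.2.2, h.2.1⟩
  loopless := by
    constructor
    intro a h
    exact H.irrefl h.1

/-- The "parent forest" graph: each vertex `a` with `0 < a < n` and `f a < a` is
joined to its parent `f a`. -/
def mkGraph (f : ℕ → ℕ) (n : ℕ) : SimpleGraph ℕ where
  Adj a b := (0 < a ∧ a < n ∧ f a < a ∧ b = f a) ∨ (0 < b ∧ b < n ∧ f b < b ∧ a = f b)
  symm := by
    constructor
    intro a b h
    rcases h with h | h
    · exact Or.inr h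
    · exact Or.inl h
  loopless := by
    constructor
    intro a h
    rcases h with ⟨_, _, h1, h2⟩ | ⟨_, _, h1, h2⟩ <;> omega

lemma mkGraph_graphOn (f : ℕ → ℕ) (n : ℕ) : GraphOn (mkGraph f n) n := by
  intro a b h
  rcases h with ⟨_, _, h1, h2⟩ | ⟨_, _, h1, h2⟩ <;> omega

lemma mkGraph_congr (f g : ℕ → ℕ) (n : ℕ) (h : ∀ j, j < n → f j = g j) :
    mkGraph f n = mkGraph g n := by
  ext a b
  constructor
  · rintro (⟨h0, h1, h2, h3⟩ | ⟨h0, h1, h2, h3⟩)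
    · exact Or.inl ⟨h0, h1, by rw [← h a h1]; exact h2, by rw [← h a h1]; exact h3⟩
    · exact Or.inr ⟨h0, h1, by rw [← h b h1]; exact h2, by rw [← h b h1]; exact h3⟩
  · rintro (⟨h0, h1, h2, h3⟩ | ⟨h0, h1, h2, h3⟩)
    · exact Or.inl ⟨h0, h1, by rw [h a h1]; exact h2, by rw [h a h1]; exact h3⟩
    · exact Or.inr ⟨h0, h1, by rw [h b h1]; exact h2, by rw [h b h1]; exact h3⟩

/-- In `mkGraph`, an edge whose smaller endpoint is `b` goes to the parent of the
larger endpoint. -/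
lemma mkGraph_adj_lt {f : ℕ → ℕ} {n a b : ℕ} (h : (mkGraph f n).Adj a b) (hba : b < a) :
    0 < a ∧ a < n ∧ b = f a := by
  rcases h with ⟨h0, h1, h2, h3⟩ | ⟨h0, h1, h2, h3⟩ <;> omega

lemma getVert_support_getElem? {V : Type*} {G : SimpleGraph V} {u v : V}
    (p : G.Walk u v) : ∀ i, i ≤ p.length → p.support[i]? = some (p.getVert i) := by
  induction p with
  | nil =>
    intro i hi
    have : i = 0 := Nat.le_zero.mp hi
    subst this
    simp
  | cons h q ih =>
    intro i hi
    cases i with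
    | zero => simp
    | succ j =>
      simp only [SimpleGraph.Walk.support_cons, SimpleGraph.Walk.getVert_cons_succ]
      rw [List.getElem?_cons_succ]
      exact ih j (by simpa [Nat.succ_le_succ_iff] using hi)

/-- Any `mkGraph` is acyclic: the maximal vertex of a cycle would have two distinct
smaller neighbours, but its only smaller neighbour is its parent. -/
lemma mkGraph_isAcyclic (f : ℕ → ℕ) (n : ℕ) : (mkGraph f n).IsAcyclic := by
  intro v c hc
  have hne : c.support.toFinset.Nonempty := by
    simp [List.toFinset_nonempty_iff, c.support_ne_nil]
  obtain ⟨m, hm, hmax⟩ : ∃ m ∈ c.support, ∀ x ∈ c.support, x ≤ m :=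
    ⟨c.support.toFinset.max' hne, List.mem_toFinset.mp (c.support.toFinset.max'_mem hne),
      fun x hx => Finset.le_max' _ x (List.mem_toFinset.mpr hx)⟩
  set c₂ := c.rotate m hm with hc₂def
  have hc₂ : c₂.IsCycle := hc.rotate hm
  have hlen : 3 ≤ c₂.length := hc₂.three_le_length
  have hmaxle : ∀ x ∈ c₂.support, x ≤ m := by
    intro x hx
    rw [c₂.support_eq_cons] at hx
    rcases List.mem_cons.mp hx with rfl | hx
    · exact le_rfl
    · exact hmax x (List.mem_of_mem_tail
        ((SimpleGraph.Walk.support_rotate c m hm).mem_iff.mp hx))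
  set L := c₂.length with hL
  set u := c₂.getVert 1 with hu
  set w := c₂.getVert (L - 1) with hw
  have h01 : (mkGraph f n).Adj m u := by
    have := c₂.adj_getVert_succ (i := 0) (by omega)
    rwa [c₂.getVert_zero] at this
  have hLm : (mkGraph f n).Adj w m := by
    have hgl : c₂.getVert L = m := by rw [hL]; exact c₂.getVert_length
    have := c₂.adj_getVert_succ (i := L - 1) (by omega)
    rwa [show L - 1 + 1 = L by omega, hgl] at this
  have hum : u ≤ m := hmaxle u (SimpleGraph.Walk.mem_support_iff_exists_getVert.mpr
    ⟨1, rfl, by omega⟩)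
  have hwm : w ≤ m := hmaxle w (SimpleGraph.Walk.mem_support_iff_exists_getVert.mpr
    ⟨L - 1, rfl, by omega⟩)
  have hult : u < m := lt_of_le_of_ne hum (fun h => h01.ne' h)
  have hwlt : w < m := lt_of_le_of_ne hwm hLm.ne
  have huf : u = f m := (mkGraph_adj_lt h01 hult).2.2
  have hwf : w = f m := (mkGraph_adj_lt hLm.symm hwlt).2.2
  -- now derive a contradiction with nodup of the tail of the support
  have h1 : c₂.support[1]? = some u := getVert_support_getElem? c₂ 1 (by omega)
  have h2 : c₂.support[L - 1]? = some w := getVert_support_getElem? c₂ (L - 1) (by omega)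
  rw [c₂.support_eq_cons, List.getElem?_cons_succ] at h1
  rw [c₂.support_eq_cons, show L - 1 = (L - 2) + 1 by omega, List.getElem?_cons_succ] at h2
  have htaillen : c₂.support.tail.length = L := by
    have := c₂.length_support
    rw [c₂.support_eq_cons] at this
    simpa using by omega
  have hnd : c₂.support.tail.Nodup := hc₂.support_nodup
  have : (0 : ℕ) = L - 2 := by
    apply (List.getElem?_inj (i := 0) (by omega) hnd).mp
    rw [h1, h2, huf, hwf]
  omega

/-- Connectivity of initial segments of `mkGraph`. -/
lemma mkGraph_induce_connected (f : ℕ → ℕ) (n i : ℕ) (hf : ∀ a, 0 < a → f a < a)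
    (h1 : 1 ≤ i) (hin : i ≤ n) : ((mkGraph f n).induce {v : ℕ | v < i}).Connected := by
  rw [SimpleGraph.connected_iff]
  have h0 : (0 : ℕ) ∈ {v : ℕ | v < i} := by simp only [Set.mem_setOf_eq]; omega
  constructor
  · have key : ∀ v : ℕ, ∀ hv : v ∈ {v : ℕ | v < i},
        ((mkGraph f n).induce {v : ℕ | v < i}).Reachable ⟨v, hv⟩ ⟨0, h0⟩ := by
      intro v
      induction v using Nat.strong_induction_on with
      | _ v ih =>
        intro hv
        rcases Nat.eq_zero_or_pos v with rfl | hvpos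
        · rfl
        · have hfv : f v < v := hf v hvpos
          have hvi : v < i := hv
          have hfvi : f v ∈ {v : ℕ | v < i} := by
            simp only [Set.mem_setOf_eq] at *; omega
          have hadj : ((mkGraph f n).induce {v : ℕ | v < i}).Adj ⟨v, hv⟩ ⟨f v, hfvi⟩ := by
            show (mkGraph f n).Adj v (f v)
            exact Or.inl ⟨hvpos, by omega, hfv, rfl⟩
          exact hadj.reachable.trans (ih (f v) hfv hfvi)
    intro a b
    exact (key a.1 a.2).trans (key b.1 b.2).symm
  · exact ⟨⟨0, h0⟩⟩

section Adversary

variable (A : ℕ → SimpleGraph ℕ → Finset ℕ)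

/-- The adversary's choice of the parent of the new vertex `i`: a vertex not in the
current dominating set, if one exists. -/
noncomputable def pick (i : ℕ) (G : SimpleGraph ℕ) : ℕ :=
  if h : ∃ p, p < i ∧ p ∉ A i G then h.choose else 0

/-- Iteratively constructed parent functions. -/
noncomputable def par : ℕ → ℕ → ℕ
  | 0 => fun _ => 0
  | i + 1 => Function.update (par i) i (pick A i (mkGraph (par i) i))

/-- The limit parent function. -/
noncomputable def pf (j : ℕ) : ℕ := par A (j + 1) j

lemma par_eq : ∀ m j, j < m → par A m j = pf A j := by
  intro m
  induction m with
  | zero => omega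
  | succ m ih =>
    intro j hj
    rcases Nat.lt_succ_iff_lt_or_eq.mp hj with h | rfl
    · show Function.update (par A m) m _ j = _
      rw [Function.update_of_ne (by omega)]
      exact ih j h
    · rfl

lemma mkGraph_par (i : ℕ) : mkGraph (par A i) i = mkGraph (pf A) i :=
  mkGraph_congr _ _ _ (fun j hj => par_eq A i j hj)

lemma pf_eq (i : ℕ) : pf A i = pick A i (mkGraph (pf A) i) := by
  show Function.update (par A i) i (pick A i (mkGraph (par A i) i)) i = _
  rw [Function.update_self, mkGraph_par]

lemma pf_lt (i : ℕ) (hi : 0 < i) : pf A i < i := by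
  rw [pf_eq]
  unfold pick
  split
  · next h => exact h.choose_spec.1
  · exact hi

end Adversary

lemma restrict_mkGraph (f : ℕ → ℕ) (i : ℕ) :
    restrict (mkGraph f (i + 1)) i = mkGraph f i := by
  ext a b
  constructor
  · rintro ⟨⟨h0, h1, h2, h3⟩ | ⟨h0, h1, h2, h3⟩, ha, hb⟩
    · exact Or.inl ⟨h0, ha, h2, h3⟩
    · exact Or.inr ⟨h0, hb, h2, h3⟩
  · rintro (⟨h0, h1, h2, h3⟩ | ⟨h0, h1, h2, h3⟩)
    · exact ⟨Or.inl ⟨h0, by omega, h2, h3⟩, h1, by omega⟩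
    · exact ⟨Or.inr ⟨h0, by omega, h2, h3⟩, by omega, h1⟩

lemma adj_new_vertex {f : ℕ → ℕ} {i u : ℕ} (h : (mkGraph f (i + 1)).Adj u i) : u = f i := by
  rcases h with ⟨h0, h1, h2, h3⟩ | ⟨h0, h1, h2, h3⟩ <;> omega

lemma card_lb (A : ℕ → SimpleGraph ℕ → Finset ℕ)
    (hdom : ∀ (i : ℕ) (H : SimpleGraph ℕ), GraphOn H i →
      (∀ v ∈ A i H, v < i) ∧
      ∀ v : ℕ, v < i → v ∈ A i H ∨ ∃ u ∈ A i H, H.Adj u v)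
    (hmono : ∀ (i : ℕ) (H : SimpleGraph ℕ), GraphOn H (i + 1) →
      A i (restrict H i) ⊆ A (i + 1) H) :
    ∀ i, i - 1 ≤ (A i (mkGraph (pf A) i)).card := by
  intro i
  induction i with
  | zero => simp
  | succ i ih =>
    set Gi := mkGraph (pf A) i with hGi
    set Gi1 := mkGraph (pf A) (i + 1) with hGi1
    have hsub : A i Gi ⊆ A (i + 1) Gi1 := by
      have h := hmono i Gi1 (mkGraph_graphOn _ _)
      rwa [show restrict Gi1 i = Gi from restrict_mkGraph _ _] at h
    by_cases h : ∃ p, p < i ∧ p ∉ A i Gi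
    · obtain ⟨hp_lt, hp_nmem⟩ := h.choose_spec
      have hpar : pf A i = h.choose := by
        rw [pf_eq]
        unfold pick
        rw [← hGi, dif_pos h]
      have hdom1 := (hdom (i + 1) Gi1 (mkGraph_graphOn _ _)).2 i (by omega)
      have hex : ∃ x, x ∈ A (i + 1) Gi1 ∧ x ∉ A i Gi := by
        rcases hdom1 with hin | ⟨u, hu, hadj⟩
        · refine ⟨i, hin, fun hmem => ?_⟩
          have := (hdom i Gi (mkGraph_graphOn _ _)).1 i hmem
          omega
        · have hufi : u = pf A i := adj_new_vertex hadj
          exact ⟨u, hu, by rw [hufi, hpar]; exact hp_nmem⟩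
      obtain ⟨x, hx1, hx2⟩ := hex
      have hss : A i Gi ⊂ A (i + 1) Gi1 := ⟨hsub, fun hsub' => hx2 (hsub' hx1)⟩
      have := Finset.card_lt_card hss
      omega
    · push_neg at h
      have hsubR : Finset.range i ⊆ A i Gi := fun p hp => h p (Finset.mem_range.mp hp)
      have h1 := Finset.card_le_card hsubR
      have h2 := Finset.card_le_card hsub
      rw [Finset.card_range] at h1
      omega

/-- For every online dominating-set algorithm `A` — a function
assigning to each `i` and each graph `H` on the first `i` vertices a dominating set
`A i H ⊆ {v_0, …, v_{i-1}}` of `H`, monotone under extending the graph by one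
vertex — and every `n ≥ 1`, there exists a tree `T` on the first `n` vertices,
presented in an always-connected order, on which `A` selects at least `n − 1`
vertices. -/
theorem online_dominating_tree_lower_bound
    (A : ℕ → SimpleGraph ℕ → Finset ℕ)
    (hdom : ∀ (i : ℕ) (H : SimpleGraph ℕ), GraphOn H i →
      (∀ v ∈ A i H, v < i) ∧
      ∀ v : ℕ, v < i → v ∈ A i H ∨ ∃ u ∈ A i H, H.Adj u v)
    (hmono : ∀ (i : ℕ) (H : SimpleGraph ℕ), GraphOn H (i + 1) →
      A i (restrict H i) ⊆ A (i + 1) H)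
    (n : ℕ) (hn : 1 ≤ n) :
    ∃ T : SimpleGraph ℕ, GraphOn T n ∧ T.IsAcyclic ∧
      (∀ i : ℕ, 1 ≤ i → i ≤ n → (T.induce {v : ℕ | v < i}).Connected) ∧
      n - 1 ≤ (A n T).card := by
  refine ⟨mkGraph (pf A) n, mkGraph_graphOn _ _, mkGraph_isAcyclic _ _, ?_, ?_⟩
  · intro i h1 h2
    exact mkGraph_induce_connected _ _ _ (pf_lt A) h1 h2
  · exact card_lb A hdom hmono n
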